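/- Product measure homogeneity: if μ₁ is (C₁,d₁)-homogeneous on B(x₁,r₁) ⊂ ℝ^{D₁} and μ₂ is (C₂,d₂)-homogeneous on B(x₂,r₂) ⊂ ℝ^{D₂}, then the product measure μ = μ₁ × μ₂ is (C, d₁+d₂)-homogeneous on B((x₁,x₂), r) with r = min(r₁,r₂) and C = C₁C₂ r^{−(d₁+d₂)} 2^{(d₁+d₂)/2} r₁^{d₁} r₂^{d₂}. -/

import Mathlib

open MeasureTheory

/-- `μ` is `(C,d)`-homogeneous on `B(x,r)`:
`μ(B(x,r)) ≤ C θ^{−d} μ(B(x,θr))` for all `θ ∈ (0,1)`. -/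
def IsHomogeneousOn {α : Type*} [PseudoMetricSpace α] [MeasurableSpace α]
    (μ : Measure α) (C d : ℝ) (x : α) (r : ℝ) : Prop :=
  ∀ θ : ℝ, θ ∈ Set.Ioo (0 : ℝ) 1 →
    (μ (Metric.ball x r)).toReal ≤ C * θ ^ (-d) * (μ (Metric.ball x (θ * r))).toReal

noncomputable instance {D₁ D₂ : ℕ} :
    MeasurableSpace (WithLp 2 (EuclideanSpace ℝ (Fin D₁) × EuclideanSpace ℝ (Fin D₂))) :=
  MeasurableSpace.comap (WithLp.equiv 2 (EuclideanSpace ℝ (Fin D₁) × EuclideanSpace ℝ (Fin D₂)))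
    inferInstance

lemma sqrt_rpow_aux (d : ℝ) : Real.sqrt 2 ^ d = (2 : ℝ) ^ (d / 2) := by
  rw [Real.sqrt_eq_rpow, ← Real.rpow_mul (by norm_num)]
  congr 1
  ring

lemma rpow_aux {θ r r' : ℝ} (hθ : 0 < θ) (hr : 0 < r) (hr' : 0 < r') (d : ℝ) :
    (θ * r / (Real.sqrt 2 * r')) ^ (-d)
      = θ ^ (-d) * r ^ (-d) * (2 : ℝ) ^ (d / 2) * r' ^ d := by
  have h2 : (0 : ℝ) < Real.sqrt 2 := by positivity
  have ha : (θ * r / (Real.sqrt 2 * r')) ^ d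
      = θ ^ d * r ^ d / (Real.sqrt 2 ^ d * r' ^ d) := by
    rw [Real.div_rpow (by positivity) (by positivity), Real.mul_rpow hθ.le hr.le,
      Real.mul_rpow h2.le hr'.le]
  rw [Real.rpow_neg (by positivity), Real.rpow_neg hθ.le, Real.rpow_neg hr.le, ha,
    sqrt_rpow_aux]
  have h1 : (0:ℝ) < θ ^ d := Real.rpow_pos_of_pos hθ d
  have h3 : (0:ℝ) < r ^ d := Real.rpow_pos_of_pos hr d
  have h4 : (0:ℝ) < r' ^ d := Real.rpow_pos_of_pos hr' d
  have h5 : (0:ℝ) < (2:ℝ) ^ (d/2) := Real.rpow_pos_of_pos (by norm_num) _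
  field_simp

/-- if `μ₁` is `(C₁,d₁)`-homogeneous on `B(x₁,r₁)` and `μ₂` is
`(C₂,d₂)`-homogeneous on `B(x₂,r₂)`, then the product measure `μ₁ × μ₂` (on the
product space equipped with the Euclidean (L²) product metric) is
`(C, d₁+d₂)`-homogeneous on `B((x₁,x₂), r)` with `r = min r₁ r₂` and
`C = C₁ C₂ r^{−(d₁+d₂)} 2^{(d₁+d₂)/2} r₁^{d₁} r₂^{d₂}`. -/
theorem product_measure_homogeneous {D₁ D₂ : ℕ}
    (μ₁ : Measure (EuclideanSpace ℝ (Fin D₁))) [IsProbabilityMeasure μ₁]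
    (μ₂ : Measure (EuclideanSpace ℝ (Fin D₂))) [IsProbabilityMeasure μ₂]
    (x₁ : EuclideanSpace ℝ (Fin D₁)) (x₂ : EuclideanSpace ℝ (Fin D₂))
    (C₁ C₂ d₁ d₂ r₁ r₂ : ℝ) (hC₁ : 0 < C₁) (hC₂ : 0 < C₂)
    (hd₁ : 0 < d₁) (hd₂ : 0 < d₂) (hr₁ : 0 < r₁) (hr₂ : 0 < r₂)
    (h₁ : IsHomogeneousOn μ₁ C₁ d₁ x₁ r₁)
    (h₂ : IsHomogeneousOn μ₂ C₂ d₂ x₂ r₂) :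
    IsHomogeneousOn
      (Measure.map (fun z : EuclideanSpace ℝ (Fin D₁) × EuclideanSpace ℝ (Fin D₂) =>
          ((WithLp.equiv 2 _).symm z)) (μ₁.prod μ₂))
      (C₁ * C₂ * (min r₁ r₂) ^ (-(d₁ + d₂)) * (2 : ℝ) ^ ((d₁ + d₂) / 2)
        * r₁ ^ d₁ * r₂ ^ d₂)
      (d₁ + d₂)
      ((WithLp.equiv 2 _).symm (x₁, x₂))
      (min r₁ r₂) := by
  intro θ hθ
  obtain ⟨hθ0, hθ1⟩ := hθ
  set r : ℝ := min r₁ r₂ with hrdef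
  have hr : 0 < r := lt_min hr₁ hr₂
  have h2 : (0 : ℝ) < Real.sqrt 2 := by positivity
  have h2gt : (1 : ℝ) < Real.sqrt 2 := by
    rw [show (1:ℝ) = Real.sqrt 1 by simp]
    exact Real.sqrt_lt_sqrt (by norm_num) (by norm_num)
  set s : ℝ := θ * r / Real.sqrt 2 with hsdef
  have hs : 0 < s := by positivity
  have hslt : s < r := by
    have h1 : θ * r < r := by nlinarith
    have : s < θ * r := by
      rw [hsdef, div_lt_iff₀ h2]
      nlinarith [mul_pos hθ0 hr]
    linarith
  set θ₁ : ℝ := θ * r / (Real.sqrt 2 * r₁) with hθ₁def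
  set θ₂ : ℝ := θ * r / (Real.sqrt 2 * r₂) with hθ₂def
  have hθ₁eq : θ₁ = s / r₁ := by rw [hθ₁def, hsdef]; ring
  have hθ₂eq : θ₂ = s / r₂ := by rw [hθ₂def, hsdef]; ring
  have hθ₁mem : θ₁ ∈ Set.Ioo (0:ℝ) 1 := by
    constructor
    · rw [hθ₁eq]; positivity
    · rw [hθ₁eq, div_lt_one hr₁]
      exact hslt.trans_le (min_le_left _ _)
  have hθ₂mem : θ₂ ∈ Set.Ioo (0:ℝ) 1 := by
    constructor
    · rw [hθ₂eq]; positivity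
    · rw [hθ₂eq, div_lt_one hr₂]
      exact hslt.trans_le (min_le_right _ _)
  have hθ₁r : θ₁ * r₁ = s := by rw [hθ₁eq, div_mul_cancel₀ _ hr₁.ne']
  have hθ₂r : θ₂ * r₂ = s := by rw [hθ₂eq, div_mul_cancel₀ _ hr₂.ne']
  have h₁' := h₁ θ₁ hθ₁mem
  have h₂' := h₂ θ₂ hθ₂mem
  -- the measurable equivalence
  set f : EuclideanSpace ℝ (Fin D₁) × EuclideanSpace ℝ (Fin D₂) →
      WithLp 2 (EuclideanSpace ℝ (Fin D₁) × EuclideanSpace ℝ (Fin D₂)) :=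
    fun z => (WithLp.equiv 2 _).symm z with hfdef
  set X := (WithLp.equiv 2 (EuclideanSpace ℝ (Fin D₁) × EuclideanSpace ℝ (Fin D₂))).symm (x₁, x₂)
    with hXdef
  let e : (EuclideanSpace ℝ (Fin D₁) × EuclideanSpace ℝ (Fin D₂)) ≃ᵐ
      WithLp 2 (EuclideanSpace ℝ (Fin D₁) × EuclideanSpace ℝ (Fin D₂)) :=
    ⟨(WithLp.equiv 2 _).symm, by rintro _ ⟨t, ht, rfl⟩; exact ht, fun s hs => ⟨s, hs, rfl⟩⟩
  have hmap : ∀ t : ℝ, (Measure.map f (μ₁.prod μ₂)) (Metric.ball X t)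
      = (μ₁.prod μ₂) (f ⁻¹' Metric.ball X t) := by
    have hfe : f = ⇑e := funext fun z => rfl
    rw [hfe]
    exact fun t => MeasurableEquiv.map_apply e (Metric.ball X t)
  -- distance facts
  have hdist : ∀ z : EuclideanSpace ℝ (Fin D₁) × EuclideanSpace ℝ (Fin D₂),
      dist (f z) X = Real.sqrt (dist z.1 x₁ ^ 2 + dist z.2 x₂ ^ 2) := fun z =>
    WithLp.prod_dist_eq_of_L2 (f z) X
  have hsub1 : f ⁻¹' Metric.ball X r ⊆ Metric.ball x₁ r₁ ×ˢ Metric.ball x₂ r₂ := by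
    intro z hz
    have hz' : dist (f z) X < r := hz
    rw [hdist z] at hz'
    have hd1 : dist z.1 x₁ ≤ Real.sqrt (dist z.1 x₁ ^ 2 + dist z.2 x₂ ^ 2) :=
      (Real.le_sqrt dist_nonneg (by positivity)).mpr (by nlinarith [sq_nonneg (dist z.2 x₂)])
    have hd2 : dist z.2 x₂ ≤ Real.sqrt (dist z.1 x₁ ^ 2 + dist z.2 x₂ ^ 2) :=
      (Real.le_sqrt dist_nonneg (by positivity)).mpr (by nlinarith [sq_nonneg (dist z.1 x₁)])
    constructor
    · exact Metric.mem_ball.mpr (lt_of_le_of_lt hd1 (hz'.trans_le (min_le_left _ _)))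
    · exact Metric.mem_ball.mpr (lt_of_le_of_lt hd2 (hz'.trans_le (min_le_right _ _)))
  have hsub2 : Metric.ball x₁ (θ₁ * r₁) ×ˢ Metric.ball x₂ (θ₂ * r₂)
      ⊆ f ⁻¹' Metric.ball X (θ * r) := by
    intro z hz
    obtain ⟨hz1, hz2⟩ := hz
    have hz1' : dist z.1 x₁ < s := by rwa [hθ₁r] at hz1
    have hz2' : dist z.2 x₂ < s := by rwa [hθ₂r] at hz2
    show dist (f z) X < θ * r
    rw [hdist z]
    have key : Real.sqrt (dist z.1 x₁ ^ 2 + dist z.2 x₂ ^ 2) < Real.sqrt (2 * s ^ 2) :=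
      Real.sqrt_lt_sqrt (by positivity)
        (by nlinarith [dist_nonneg (x := z.1) (y := x₁), dist_nonneg (x := z.2) (y := x₂)])
    have hsq : Real.sqrt (2 * s ^ 2) = θ * r := by
      rw [Real.sqrt_mul (by norm_num), Real.sqrt_sq hs.le, hsdef]
      field_simp
    rwa [hsq] at key
  -- measure chain
  have hne : ∀ S : Set (EuclideanSpace ℝ (Fin D₁) × EuclideanSpace ℝ (Fin D₂)),
      (μ₁.prod μ₂) S ≠ ⊤ := fun S => measure_ne_top _ _
  have hconst : C₁ * θ₁ ^ (-d₁) * (C₂ * θ₂ ^ (-d₂))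
      = C₁ * C₂ * r ^ (-(d₁ + d₂)) * (2 : ℝ) ^ ((d₁ + d₂) / 2) * r₁ ^ d₁ * r₂ ^ d₂
        * θ ^ (-(d₁ + d₂)) := by
    rw [hθ₁def, hθ₂def, rpow_aux hθ0 hr hr₁ d₁, rpow_aux hθ0 hr hr₂ d₂,
      show -(d₁ + d₂) = -d₁ + -d₂ by ring, Real.rpow_add hθ0, Real.rpow_add hr,
      show (d₁ + d₂) / 2 = d₁ / 2 + d₂ / 2 by ring, Real.rpow_add (by norm_num : (0:ℝ) < 2)]
    ring
  have hconstpos : 0 < C₁ * θ₁ ^ (-d₁) * (C₂ * θ₂ ^ (-d₂)) := by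
    have := Real.rpow_pos_of_pos hθ₁mem.1 (-d₁)
    have := Real.rpow_pos_of_pos hθ₂mem.1 (-d₂)
    positivity
  calc ((Measure.map f (μ₁.prod μ₂)) (Metric.ball X r)).toReal
      = ((μ₁.prod μ₂) (f ⁻¹' Metric.ball X r)).toReal := by rw [hmap]
    _ ≤ ((μ₁.prod μ₂) (Metric.ball x₁ r₁ ×ˢ Metric.ball x₂ r₂)).toReal :=
        ENNReal.toReal_mono (hne _) (measure_mono hsub1)
    _ = (μ₁ (Metric.ball x₁ r₁)).toReal * (μ₂ (Metric.ball x₂ r₂)).toReal := by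
        rw [Measure.prod_prod, ENNReal.toReal_mul]
    _ ≤ (C₁ * θ₁ ^ (-d₁) * (μ₁ (Metric.ball x₁ (θ₁ * r₁))).toReal)
        * (C₂ * θ₂ ^ (-d₂) * (μ₂ (Metric.ball x₂ (θ₂ * r₂))).toReal) := by
        apply mul_le_mul h₁' h₂' ENNReal.toReal_nonneg
        exact le_trans ENNReal.toReal_nonneg h₁'
    _ = (C₁ * θ₁ ^ (-d₁) * (C₂ * θ₂ ^ (-d₂)))
        * ((μ₁ (Metric.ball x₁ (θ₁ * r₁))).toReal
          * (μ₂ (Metric.ball x₂ (θ₂ * r₂))).toReal) := by ring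
    _ = (C₁ * θ₁ ^ (-d₁) * (C₂ * θ₂ ^ (-d₂)))
        * ((μ₁.prod μ₂) (Metric.ball x₁ (θ₁ * r₁) ×ˢ Metric.ball x₂ (θ₂ * r₂))).toReal := by
        rw [Measure.prod_prod, ENNReal.toReal_mul]
    _ ≤ (C₁ * θ₁ ^ (-d₁) * (C₂ * θ₂ ^ (-d₂)))
        * ((μ₁.prod μ₂) (f ⁻¹' Metric.ball X (θ * r))).toReal := by
        apply mul_le_mul_of_nonneg_left _ hconstpos.le
        exact ENNReal.toReal_mono (hne _) (measure_mono hsub2)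
    _ = C₁ * C₂ * r ^ (-(d₁ + d₂)) * (2 : ℝ) ^ ((d₁ + d₂) / 2) * r₁ ^ d₁ * r₂ ^ d₂
        * θ ^ (-(d₁ + d₂))
        * ((Measure.map f (μ₁.prod μ₂)) (Metric.ball X (θ * r))).toReal := by
        rw [hmap, hconst]
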